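/- Let K ≥ 1, let α_1,…,α_K ≥ 0 with Σ_k α_k = 1, let 0 ≤ c < θ̄, and for each k let F_k : ℝ → ℝ be nondecreasing with values in [0,1]. Suppose each profit function π_k(p) = (p − c)·(1 − F_k(p)) is concave on [0, θ̄]. Then the uniform price p_s = (c + θ̄)/2 satisfies Σ_k α_k·π_k(p_s) ≥ (1/2)·Σ_k α_k·(sup_{p ∈ [0,θ̄]} π_k(p)). In particular, the optimal uniform-price profit Π^U = sup_{p ∈ [0,θ̄]} Σ_k α_k π_k(p) is at least one half of the optimal third-degree price-discrimination profit Π* = Σ_k α_k · sup_{p ∈ [0,θ̄]} π_k(p). -/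

import Mathlib

/-- **Uniform price is a half approximation.**
With `K ≥ 1` segments with weights `α k ≥ 0` summing to one, marginal cost
`0 ≤ c < θ̄`, CDFs `F k` (nondecreasing, with values in `[0,1]`) and concave
profit functions `π k p = (p - c) * (1 - F k p)` on the common support
`[0, θ̄]`, the uniform price `p_s = (c + θ̄)/2` earns at least half of the
optimal third-degree price-discrimination profit; in particular the optimal
uniform-price profit is at least half of the discrimination profit. -/
theorem uniform_price_half_approximation
    (K : ℕ) (hK : 1 ≤ K) (α : Fin K → ℝ) (hα : ∀ k, 0 ≤ α k)
    (hsum : ∑ k, α k = 1)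
    (c θ : ℝ) (hc : 0 ≤ c) (hcθ : c < θ)
    (F : Fin K → ℝ → ℝ) (hFmono : ∀ k, Monotone (F k))
    (hF0 : ∀ k p, 0 ≤ F k p) (hF1 : ∀ k p, F k p ≤ 1)
    (π : Fin K → ℝ → ℝ) (hπ : ∀ k p, π k p = (p - c) * (1 - F k p))
    (hconc : ∀ k, ConcaveOn ℝ (Set.Icc 0 θ) (π k)) :
    (∑ k, α k * π k ((c + θ) / 2)
        ≥ (1 / 2) * ∑ k, α k * sSup (π k '' Set.Icc 0 θ)) ∧
    (sSup ((fun p => ∑ k, α k * π k p) '' Set.Icc 0 θ)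
        ≥ (1 / 2) * ∑ k, α k * sSup (π k '' Set.Icc 0 θ)) := by
  set ps : ℝ := (c + θ) / 2 with hps
  have hcps : c < ps := by rw [hps]; linarith
  have hpsθ : ps < θ := by rw [hps]; linarith
  have hpsmem : ps ∈ Set.Icc 0 θ := ⟨by linarith, by linarith⟩
  have hcmem : c ∈ Set.Icc (0:ℝ) θ := ⟨hc, le_of_lt hcθ⟩
  have hθmem : θ ∈ Set.Icc (0:ℝ) θ := ⟨by linarith, le_refl θ⟩
  have hπc : ∀ k, π k c = 0 := by intro k; rw [hπ]; ring
  have hπps : ∀ k, 0 ≤ π k ps := by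
    intro k; rw [hπ]
    have := hF1 k ps
    nlinarith
  have hπθ : ∀ k, 0 ≤ π k θ := by
    intro k; rw [hπ]
    have := hF1 k θ
    nlinarith
  -- key pointwise bound
  have key : ∀ k, ∀ p ∈ Set.Icc (0:ℝ) θ, π k p ≤ 2 * π k ps := by
    intro k p hp
    rcases le_or_gt (π k p) 0 with hle | hpos
    · have := hπps k; linarith
    · -- π k p > 0 forces c < p
      have hcp : c < p := by
        by_contra h
        push_neg at h
        have h1 : 1 - F k p ≥ 0 := by have := hF1 k p; linarith
        have : π k p ≤ 0 := by
          rw [hπ]; nlinarith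
        linarith
      rcases le_or_gt p ps with hpps | hpsp
      · -- p ≤ ps : ps is between p and θ
        have hpθ : p < θ := lt_of_le_of_lt hpps hpsθ
        have hd : (0:ℝ) < θ - p := by linarith
        set a : ℝ := (θ - ps) / (θ - p) with ha
        set b : ℝ := (ps - p) / (θ - p) with hb
        have ha0 : 0 ≤ a := by
          apply div_nonneg <;> linarith
        have hb0 : 0 ≤ b := by
          apply div_nonneg <;> linarith
        have hab : a + b = 1 := by
          rw [ha, hb]; field_simp; ring
        have hxy : a * p + b * θ = ps := by
          rw [ha, hb]; field_simp; ring
        have hcc := (hconc k).2 hp hθmem ha0 hb0 hab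
        simp only [smul_eq_mul] at hcc
        rw [hxy] at hcc
        have ha2 : (1:ℝ)/2 ≤ a := by
          rw [ha, le_div_iff₀ hd, hps]; linarith
        have hbπ : 0 ≤ b * π k θ := mul_nonneg hb0 (hπθ k)
        nlinarith [mul_le_mul_of_nonneg_right ha2 (le_of_lt hpos)]
      · -- ps < p : ps is between c and p
        have hd : (0:ℝ) < p - c := by linarith
        set a : ℝ := (p - ps) / (p - c) with ha
        set b : ℝ := (ps - c) / (p - c) with hb
        have ha0 : 0 ≤ a := by apply div_nonneg <;> linarith
        have hb0 : 0 ≤ b := by apply div_nonneg <;> linarith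
        have hab : a + b = 1 := by rw [ha, hb]; field_simp; ring
        have hxy : a * c + b * p = ps := by
          rw [ha, hb]; field_simp; ring
        have hcc := (hconc k).2 hcmem hp ha0 hb0 hab
        simp only [smul_eq_mul] at hcc
        rw [hxy, hπc k] at hcc
        have hb2 : (1:ℝ)/2 ≤ b := by
          rw [hb, le_div_iff₀ hd, hps]
          have : p ≤ θ := hp.2
          linarith
        nlinarith [mul_le_mul_of_nonneg_right hb2 (le_of_lt hpos)]
  -- sup of each π k over Icc is ≤ 2 π k ps
  have hsup : ∀ k, sSup (π k '' Set.Icc 0 θ) ≤ 2 * π k ps := by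
    intro k
    apply Real.sSup_le
    · rintro x ⟨p, hp, rfl⟩
      exact key k p hp
    · have := hπps k; linarith
  have hmain : ∑ k, α k * π k ps ≥ (1 / 2) * ∑ k, α k * sSup (π k '' Set.Icc 0 θ) := by
    rw [ge_iff_le, Finset.mul_sum]
    apply Finset.sum_le_sum
    intro k _
    have := mul_le_mul_of_nonneg_left (hsup k) (hα k)
    nlinarith
  refine ⟨hmain, ?_⟩
  -- the sSup of the aggregate is ≥ its value at ps
  have hbdd : BddAbove ((fun p => ∑ k, α k * π k p) '' Set.Icc 0 θ) := by
    refine ⟨θ, ?_⟩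
    rintro x ⟨p, hp, rfl⟩
    have hπle : ∀ k, π k p ≤ θ := by
      intro k
      rw [hπ k p]
      have h1 := hF0 k p
      have h2 := hF1 k p
      have h3 := hp.1
      have h4 := hp.2
      rcases le_or_gt p c with h | h
      · nlinarith
      · nlinarith
    calc ∑ k, α k * π k p ≤ ∑ k, α k * θ := by
          apply Finset.sum_le_sum
          intro k _
          exact mul_le_mul_of_nonneg_left (hπle k) (hα k)
      _ = θ := by rw [← Finset.sum_mul, hsum, one_mul]
  have hmem : (∑ k, α k * π k ps) ∈ ((fun p => ∑ k, α k * π k p) '' Set.Icc 0 θ) :=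
    ⟨ps, hpsmem, rfl⟩
  have := le_csSup hbdd hmem
  linarith
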